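/- arXiv:2003.11789 — 4 statements merged into one kernel-verified Lean document; each statement's English description precedes it below -/
import Mathlib

section
/- Two command words x and y are equivalent (related by the reflexive-transitive closure of swapping adjacent commuting commands) if and only if they contain the same multiset of command occurrences and order non-commuting occurrences identically: occ(x) = occ(y) and for all commands c, d with ¬(c ~ d) and all occurrence indices i, j, the i-th occurrence of c precedes the j-th occurrence of d in x iff it does so in y. -/
/-- One transposition of two adjacent commuting commands. -/
def SwapStep {C : Type*} (comm : C → C → Prop) (x y : List C) : Prop :=
  ∃ (z w : List C) (c d : C), comm c d ∧ x = z ++ c :: d :: w ∧ y = z ++ d :: c :: w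

/-- Equivalence of command words generated by transposing adjacent commuting
commands. -/
def WordEquiv {C : Type*} (comm : C → C → Prop) : List C → List C → Prop :=
  Relation.ReflTransGen (SwapStep comm)

/-- 1-based position of the k-th occurrence of `c` in a word, `0` if absent. -/
def pos {C : Type*} [DecidableEq C] (c : C) : ℕ → List C → ℕ
  | _, [] => 0
  | k, a :: l =>
    if a = c then
      if k ≤ 1 then (if k = 1 then 1 else 0)
      else match pos c (k - 1) l with
        | 0 => 0
        | p => p + 1
    else match pos c k l with
      | 0 => 0
      | p => p + 1

/-- The set of command occurrences of a word: pairs `(c, i)` with `c`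
occurring at least `i ≥ 1` times. -/
def occ {C : Type*} [DecidableEq C] (x : List C) : Set (C × ℕ) :=
  {p | 1 ≤ p.2 ∧ p.2 ≤ x.count p.1}

section Aux
variable {C : Type*} [DecidableEq C]

def shift : ℕ → ℕ
  | 0 => 0
  | p + 1 => p + 2

lemma shift_eq (n : ℕ) : shift n = if n = 0 then 0 else n + 1 := by
  cases n <;> simp [shift]

lemma pos_cons_ne {a c : C} (h : a ≠ c) (k : ℕ) (l : List C) :
    pos c k (a :: l) = shift (pos c k l) := by
  rw [pos, if_neg h]
  cases hh : pos c k l <;> simp [shift]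

lemma pos_cons_self_one (c : C) (l : List C) : pos c 1 (c :: l) = 1 := by
  simp [pos]

lemma pos_cons_self (c : C) (k : ℕ) (l : List C) (hk : 2 ≤ k) :
    pos c k (c :: l) = shift (pos c (k - 1) l) := by
  rw [pos, if_pos rfl, if_neg (by omega)]
  cases hh : pos c (k - 1) l <;> simp [shift]

lemma pos_zero (c : C) (l : List C) : pos c 0 l = 0 := by
  induction l with
  | nil => rfl
  | cons a l ih =>
    by_cases h : a = c
    · subst h; rw [pos]; simp
    · rw [pos_cons_ne h, ih]; rfl

lemma pos_eq_zero_iff (c : C) (k : ℕ) (l : List C) :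
    pos c k l = 0 ↔ k = 0 ∨ l.count c < k := by
  induction l generalizing k with
  | nil => simp [pos]; omega
  | cons a l ih =>
    by_cases h : a = c
    · subst h
      rw [List.count_cons_self]
      by_cases hk0 : k = 0
      · subst hk0; simp [pos_zero]
      by_cases hk1 : k = 1
      · subst hk1; simp [pos_cons_self_one]
      rw [pos_cons_self _ _ _ (by omega), shift_eq]
      by_cases h0 : pos a (k - 1) l = 0
      · rw [if_pos h0]
        have h1 := (ih (k - 1)).mp h0
        simp only [eq_self_iff_true, true_iff]
        omega
      · rw [if_neg h0]
        have h1 : ¬ (k - 1 = 0 ∨ List.count a l < k - 1) := by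
          rw [← ih (k - 1)]; exact h0
        push_neg at h1
        constructor
        · intro hh; omega
        · intro hh; omega
    · rw [pos_cons_ne h, shift_eq,
        List.count_cons_of_ne h]
      by_cases h0 : pos c k l = 0
      · rw [if_pos h0]
        have h1 := (ih k).mp h0
        simp only [eq_self_iff_true, true_iff]
        exact h1
      · rw [if_neg h0]
        have h1 : ¬ (k = 0 ∨ List.count c l < k) := by rw [← ih k]; exact h0
        push_neg at h1
        constructor
        · intro hh; omega
        · intro hh; omega

lemma pos_get {c : C} {k p : ℕ} {l : List C} (h : pos c k l = p) (hp : 1 ≤ p) :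
    l[p - 1]? = some c := by
  induction l generalizing k p with
  | nil => simp [pos] at h; omega
  | cons a l ih =>
    by_cases hac : a = c
    · subst hac
      by_cases hk0 : k = 0
      · subst hk0; rw [pos_zero] at h; omega
      by_cases hk1 : k = 1
      · subst hk1; rw [pos_cons_self_one] at h
        subst h; simp
      rw [pos_cons_self _ _ _ (by omega), shift_eq] at h
      by_cases h0 : pos a (k - 1) l = 0
      · rw [if_pos h0] at h; omega
      · rw [if_neg h0] at h
        have hh : pos a (k - 1) l = p - 1 := by omega
        have h2 := ih hh (by omega)
        rcases p with _ | _ | p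
        · omega
        · omega
        · simpa using h2
    · rw [pos_cons_ne hac, shift_eq] at h
      by_cases h0 : pos c k l = 0
      · rw [if_pos h0] at h; omega
      · rw [if_neg h0] at h
        have hh : pos c k l = p - 1 := by omega
        have h2 := ih hh (by omega)
        rcases p with _ | _ | p
        · omega
        · omega
        · simpa using h2

lemma pos_one_eq {b : C} {l : List C} (h : b ∈ l) :
    pos b 1 l = l.idxOf b + 1 := by
  induction l with
  | nil => simp at h
  | cons a l ih =>
    by_cases hab : a = b
    · subst hab; simp [pos_cons_self_one]
    · have hb : b ∈ l := by
        rcases List.mem_cons.mp h with h1 | h1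
        · exact absurd h1.symm hab
        · exact h1
      rw [pos_cons_ne hab, ih hb, shift_eq]
      rw [List.idxOf_cons_ne l hab]
      simp


/-- The permutation of positions induced by swapping positions L+1 and L+2. -/
def swf (L p : ℕ) : ℕ := if p = L + 1 then L + 2 else if p = L + 2 then L + 1 else p

lemma swf_eq1 {L p : ℕ} (h : p = L + 1) : swf L p = L + 2 := by
  rw [swf, if_pos h]

lemma swf_eq2 {L p : ℕ} (h : p = L + 2) : swf L p = L + 1 := by
  rw [swf, if_neg (by omega), if_pos h]

lemma swf_eq3 {L p : ℕ} (h1 : p ≠ L + 1) (h2 : p ≠ L + 2) : swf L p = p := by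
  rw [swf, if_neg h1, if_neg h2]

lemma shift_swf (L q : ℕ) : shift (swf L q) = swf (L + 1) (shift q) := by
  by_cases h1 : q = L + 1
  · rw [swf_eq1 h1, shift_eq, if_neg (by omega), shift_eq, if_neg (by omega),
      swf_eq1 (by omega)]
  by_cases h2 : q = L + 2
  · rw [swf_eq2 h2, shift_eq, if_neg (by omega), shift_eq, if_neg (by omega),
      swf_eq2 (by omega)]
  by_cases h0 : q = 0
  · subst h0
    rw [swf_eq3 (by omega) (by omega), shift_eq, if_pos rfl,
      swf_eq3 (by omega) (by omega)]
  · rw [swf_eq3 h1 h2, shift_eq, if_neg h0,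
      swf_eq3 (by omega) (by omega)]

lemma swf_shift2 (q : ℕ) : swf 0 (shift (shift q)) = shift (shift q) := by
  cases q <;> simp [shift, swf]

lemma swap_pos {c d : C} (hcd : c ≠ d) (z w : List C) (e : C) (k : ℕ) :
    pos e k (z ++ d :: c :: w) = swf z.length (pos e k (z ++ c :: d :: w)) := by
  induction z generalizing k with
  | nil =>
    simp only [List.nil_append, List.length_nil]
    by_cases hk0 : k = 0
    · subst hk0; rw [pos_zero, pos_zero]; rfl
    by_cases hec : e = c
    · rw [← hec] at hcd ⊢
      by_cases hk1 : k = 1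
      · subst hk1
        rw [pos_cons_self_one, pos_cons_ne (Ne.symm hcd), pos_cons_self_one]
        rfl
      · rw [pos_cons_self _ _ _ (by omega), pos_cons_ne (Ne.symm hcd),
          pos_cons_self _ _ _ (by omega), pos_cons_ne (Ne.symm hcd), swf_shift2]
    by_cases hed : e = d
    · rw [← hed] at hcd ⊢
      by_cases hk1 : k = 1
      · subst hk1
        rw [pos_cons_self_one, pos_cons_ne hcd, pos_cons_self_one]
        rfl
      · rw [pos_cons_self _ _ _ (by omega), pos_cons_ne hcd, pos_cons_ne hcd,
          pos_cons_self _ _ _ (by omega), swf_shift2]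
    · rw [pos_cons_ne (fun h => hec h.symm), pos_cons_ne (fun h => hed h.symm),
        pos_cons_ne (fun h => hed h.symm), pos_cons_ne (fun h => hec h.symm),
        swf_shift2]
  | cons a z ih =>
    simp only [List.cons_append, List.length_cons]
    by_cases hea : a = e
    · subst hea
      by_cases hk0 : k = 0
      · subst hk0; rw [pos_zero, pos_zero]; rfl
      by_cases hk1 : k = 1
      · subst hk1
        rw [pos_cons_self_one, pos_cons_self_one]
        rw [swf_eq3 (by omega) (by omega)]
      · rw [pos_cons_self _ _ _ (by omega), pos_cons_self _ _ _ (by omega),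
          ih (k - 1), shift_swf]
    · rw [pos_cons_ne hea, pos_cons_ne hea, ih k, shift_swf]

lemma swf_lt_iff {L p q : ℕ}
    (h1 : ¬(p = L + 1 ∧ q = L + 2)) (h2 : ¬(p = L + 2 ∧ q = L + 1)) :
    swf L p < swf L q ↔ p < q := by
  simp only [swf]; split_ifs <;> omega

lemma mem_occ_iff {c : C} {i : ℕ} {l : List C} :
    (c, i) ∈ occ l ↔ 1 ≤ i ∧ i ≤ l.count c := Iff.rfl

lemma pos_pos {c : C} {i : ℕ} {l : List C} (h : (c, i) ∈ occ l) :
    1 ≤ pos c i l := by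
  obtain ⟨h1, h2⟩ := h
  have h1' : 1 ≤ i := h1
  have h2' : i ≤ l.count c := h2
  by_contra hh
  have h0 : pos c i l = 0 := by omega
  rcases (pos_eq_zero_iff c i l).mp h0 with h3 | h3 <;> omega

lemma swap_count {c d : C} (z w : List C) (e : C) :
    (z ++ d :: c :: w).count e = (z ++ c :: d :: w).count e := by
  simp only [List.count_append, List.count_cons]
  omega

lemma occ_eq_of_count (x y : List C) (h : ∀ e, x.count e = y.count e) :
    occ x = occ y := by
  ext ⟨c, i⟩
  simp only [mem_occ_iff, h]

lemma get_append_mid (z t : List C) (n : ℕ) :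
    (z ++ t)[z.length + n]? = t[n]? := by
  rw [List.getElem?_append_right (by omega)]
  congr 1
  omega

lemma step_inv {comm : C → C → Prop} (hsymm : Symmetric comm) {x y : List C}
    (h : SwapStep comm x y) :
    occ x = occ y ∧
      ∀ c d, ¬ comm c d → ∀ i j, (c, i) ∈ occ x → (d, j) ∈ occ x →
        (pos c i x < pos d j x ↔ pos c i y < pos d j y) := by
  obtain ⟨z, w, c, d, hc, hx, hy⟩ := h
  by_cases hcd : c = d
  · subst hcd
    rw [hx, hy]
    exact ⟨rfl, fun _ _ _ _ _ _ _ => Iff.rfl⟩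
  subst hx; subst hy
  have hocc : occ (z ++ c :: d :: w) = occ (z ++ d :: c :: w) :=
    occ_eq_of_count _ _ (fun e => (swap_count z w e).symm)
  refine ⟨hocc, fun c' d' hnc i j hi hj => ?_⟩
  have hp := pos_pos hi
  have hq := pos_pos hj
  rw [swap_pos hcd z w c' i, swap_pos hcd z w d' j]
  rw [swf_lt_iff ?h1 ?h2]
  case h1 =>
    rintro ⟨h1, h2⟩
    -- then c' = c and d' = d
    have g1 : (z ++ c :: d :: w)[z.length + 0]? = some c' := by
      have := pos_get h1 (by omega)
      simpa using this
    have g2 : (z ++ c :: d :: w)[z.length + 1]? = some d' := by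
      have := pos_get h2 (by omega)
      have he : z.length + 2 - 1 = z.length + 1 := by omega
      rwa [he] at this
    rw [get_append_mid] at g1 g2
    simp only [List.getElem?_cons_zero, List.getElem?_cons_succ] at g1 g2
    obtain rfl : c = c' := Option.some_inj.mp g1
    obtain rfl : d = d' := Option.some_inj.mp g2
    exact hnc hc
  case h2 =>
    rintro ⟨h1, h2⟩
    have g1 : (z ++ c :: d :: w)[z.length + 1]? = some c' := by
      have := pos_get h1 (by omega)
      have he : z.length + 2 - 1 = z.length + 1 := by omega
      rwa [he] at this
    have g2 : (z ++ c :: d :: w)[z.length + 0]? = some d' := by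
      have := pos_get h2 (by omega)
      simpa using this
    rw [get_append_mid] at g1 g2
    simp only [List.getElem?_cons_zero, List.getElem?_cons_succ] at g1 g2
    obtain rfl : d = c' := Option.some_inj.mp g1
    obtain rfl : c = d' := Option.some_inj.mp g2
    exact hnc (hsymm hc)

lemma equiv_inv {comm : C → C → Prop} (hsymm : Symmetric comm) {x y : List C}
    (h : WordEquiv comm x y) :
    occ x = occ y ∧
      ∀ c d, ¬ comm c d → ∀ i j, (c, i) ∈ occ x → (d, j) ∈ occ x →
        (pos c i x < pos d j x ↔ pos c i y < pos d j y) := by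
  induction h with
  | refl => exact ⟨rfl, fun _ _ _ _ _ _ _ => Iff.rfl⟩
  | tail hxb hbc ih =>
    obtain ⟨ho1, hd1⟩ := ih
    obtain ⟨ho2, hd2⟩ := step_inv hsymm hbc
    refine ⟨ho1.trans ho2, fun c d hnc i j hi hj => ?_⟩
    refine (hd1 c d hnc i j hi hj).trans (hd2 c d hnc i j ?_ ?_)
    · rw [← ho1]; exact hi
    · rw [← ho1]; exact hj

lemma count_eq_of_occ_eq {x y : List C} (h : occ x = occ y) (e : C) :
    x.count e = y.count e := by
  rcases Nat.eq_zero_or_pos (x.count e) with h1 | h1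
  · rcases Nat.eq_zero_or_pos (y.count e) with h2 | h2
    · omega
    · have : (e, y.count e) ∈ occ x := by rw [h]; exact ⟨h2, le_refl _⟩
      have h3 : y.count e ≤ x.count e := this.2
      omega
  · have hx : (e, x.count e) ∈ occ y := by rw [← h]; exact ⟨h1, le_refl _⟩
    have h3 : x.count e ≤ y.count e := hx.2
    rcases Nat.eq_zero_or_pos (y.count e) with h2 | h2
    · omega
    · have hy : (e, y.count e) ∈ occ x := by rw [h]; exact ⟨h2, le_refl _⟩
      have h4 : y.count e ≤ x.count e := hy.2
      omega

lemma wordEquiv_cons {comm : C → C → Prop} (a : C) {l m : List C}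
    (h : WordEquiv comm l m) : WordEquiv comm (a :: l) (a :: m) := by
  refine Relation.ReflTransGen.lift (fun t => a :: t) (fun p q hpq => ?_) _ _ h
  obtain ⟨z, w, c, d, hc, hp, hq⟩ := hpq
  exact ⟨a :: z, w, c, d, hc, by rw [hp]; rfl, by rw [hq]; rfl⟩

lemma wordEquiv_symm {comm : C → C → Prop} (hsymm : Symmetric comm)
    {x y : List C} (h : WordEquiv comm x y) : WordEquiv comm y x := by
  refine @Std.Symm.symm _ (Relation.ReflTransGen (SwapStep comm)) (@Relation.ReflTransGen.stdSymm _ (SwapStep comm) ⟨fun p q hpq => ?_⟩) _ _ h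
  obtain ⟨z, w, c, d, hc, hp, hq⟩ := hpq
  exact ⟨z, w, d, c, hsymm hc, hq, hp⟩

lemma bubble {comm : C → C → Prop} {a : C} {u v : List C}
    (h : ∀ b ∈ u, comm b a) :
    WordEquiv comm (u ++ a :: v) (a :: (u ++ v)) := by
  induction u with
  | nil => exact Relation.ReflTransGen.refl
  | cons b u ih =>
    have h1 : WordEquiv comm (u ++ a :: v) (a :: (u ++ v)) :=
      ih (fun e he => h e (List.mem_cons_of_mem _ he))
    have h2 : WordEquiv comm (b :: (u ++ a :: v)) (b :: a :: (u ++ v)) :=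
      wordEquiv_cons b h1
    have h3 : SwapStep comm (b :: a :: (u ++ v)) (a :: b :: (u ++ v)) :=
      ⟨[], u ++ v, b, a, h b List.mem_cons_self, rfl, rfl⟩
    exact h2.trans (Relation.ReflTransGen.single h3)

lemma mem_split_first {a : C} {y : List C} (h : a ∈ y) :
    ∃ u v, y = u ++ a :: v ∧ a ∉ u := by
  induction y with
  | nil => simp at h
  | cons b y ih =>
    by_cases hb : b = a
    · exact ⟨[], y, by rw [hb]; rfl, by simp⟩
    · rcases List.mem_cons.mp h with h1 | h1
      · exact absurd h1.symm hb
      · obtain ⟨u, v, rfl, hau⟩ := ih h1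
        refine ⟨b :: u, v, rfl, ?_⟩
        simp only [List.mem_cons, not_or]
        exact ⟨fun hh => hb hh.symm, hau⟩

lemma pos_cons_ne' {a c : C} {k : ℕ} {l : List C} (h : a ≠ c)
    (hocc : (c, k) ∈ occ l) : pos c k (a :: l) = pos c k l + 1 := by
  rw [pos_cons_ne h, shift_eq, if_neg]
  have := pos_pos hocc
  omega

lemma pos_cons_self' {a : C} {k : ℕ} {l : List C}
    (hocc : (a, k) ∈ occ l) : pos a (k + 1) (a :: l) = pos a k l + 1 := by
  have hk : 1 ≤ k := hocc.1
  rw [pos_cons_self _ _ _ (by omega), shift_eq, Nat.add_sub_cancel, if_neg]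
  have := pos_pos hocc
  omega

lemma inv_equiv {comm : C → C → Prop} (hsymm : Symmetric comm) :
    ∀ (x y : List C), occ x = occ y →
      (∀ c d, ¬ comm c d → ∀ i j, (c, i) ∈ occ x → (d, j) ∈ occ x →
        (pos c i x < pos d j x ↔ pos c i y < pos d j y)) →
      WordEquiv comm x y := by
  intro x
  induction x with
  | nil =>
    intro y hocc _
    cases y with
    | nil => exact Relation.ReflTransGen.refl
    | cons b y' =>
      exfalso
      have hb : (b, 1) ∈ occ (b :: y') := by
        refine ⟨le_refl 1, ?_⟩
        rw [List.count_cons_self]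
        omega
      rw [← hocc] at hb
      have := hb.2
      simp at this
  | cons a x' ih =>
    intro y hocc hord
    have hcnt : ∀ e, (a :: x').count e = y.count e := count_eq_of_occ_eq hocc
    have ha : a ∈ y := by
      rw [← List.count_pos_iff]
      have := hcnt a
      rw [List.count_cons_self] at this
      omega
    obtain ⟨u, v, rfl, hau⟩ := mem_split_first ha
    have hay : a ∈ u ++ a :: v := ha
    -- all letters before the first occurrence of `a` commute with `a`
    have hcu : ∀ b ∈ u, comm b a := by
      intro b hb
      by_contra hnc
      have hnc' : ¬ comm a b := fun hh => hnc (hsymm hh)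
      have hba : b ≠ a := fun hh => hau (hh ▸ hb)
      have hby : b ∈ u ++ a :: v := List.mem_append_left _ hb
      have hbx : (b, 1) ∈ occ (a :: x') := by
        rw [hocc]
        refine ⟨le_refl 1, ?_⟩
        show 1 ≤ List.count b (u ++ a :: v)
        exact List.count_pos_iff.mpr hby
      have hax : (a, 1) ∈ occ (a :: x') := by
        refine ⟨le_refl 1, ?_⟩
        rw [List.count_cons_self]; omega
      have horder := hord a b hnc' 1 1 hax hbx
      have p1 : pos a 1 (a :: x') = 1 := pos_cons_self_one a x'
      have p2 : 1 ≤ pos b 1 (a :: x') := pos_pos hbx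
      have p3 : pos b 1 (a :: x') = shift (pos b 1 x') :=
        pos_cons_ne (Ne.symm hba) 1 x'
      have p4 : 2 ≤ pos b 1 (a :: x') := by
        rw [p3, shift_eq] at p2 ⊢
        split_ifs at p2 ⊢ with h0
        · omega
        · omega
      have hlt : pos a 1 (a :: x') < pos b 1 (a :: x') := by omega
      have hlty := horder.mp hlt
      have q1 : pos a 1 (u ++ a :: v) = u.length + 1 := by
        rw [pos_one_eq hay, List.idxOf_append_of_notMem hau]
        simp
      have q2 : pos b 1 (u ++ a :: v) = List.idxOf b u + 1 := by
        rw [pos_one_eq hby, List.idxOf_append_of_mem hb]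
      have q3 : List.idxOf b u < u.length := List.idxOf_lt_length_iff.mpr hb
      omega
    have hbub : WordEquiv comm (u ++ a :: v) (a :: (u ++ v)) := bubble hcu
    obtain ⟨ho2, hd2⟩ := equiv_inv hsymm hbub
    have hoccxY : occ (a :: x') = occ (a :: (u ++ v)) := hocc.trans ho2
    have hordxY : ∀ c d, ¬ comm c d → ∀ i j,
        (c, i) ∈ occ (a :: x') → (d, j) ∈ occ (a :: x') →
        (pos c i (a :: x') < pos d j (a :: x') ↔
          pos c i (a :: (u ++ v)) < pos d j (a :: (u ++ v))) := by
      intro c d hnc i j hi hj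
      refine (hord c d hnc i j hi hj).trans (hd2 c d hnc i j ?_ ?_)
      · rw [← hocc]; exact hi
      · rw [← hocc]; exact hj
    have hcntY := count_eq_of_occ_eq hoccxY
    have hocc' : occ x' = occ (u ++ v) := by
      refine occ_eq_of_count _ _ (fun e => ?_)
      have := hcntY e
      rw [List.count_cons, List.count_cons] at this
      omega
    have hcnt' := count_eq_of_occ_eq hocc'
    have key : ∀ (e : C) (k : ℕ), (e, k) ∈ occ x' →
        ∃ k', (e, k') ∈ occ (a :: x') ∧
          pos e k' (a :: x') = pos e k x' + 1 ∧
          pos e k' (a :: (u ++ v)) = pos e k (u ++ v) + 1 := by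
      intro e k h1
      have h2 : (e, k) ∈ occ (u ++ v) := by rw [← hocc']; exact h1
      by_cases hea : e = a
      · subst hea
        have hck : k ≤ List.count e x' := h1.2
        refine ⟨k + 1, ⟨by omega, ?_⟩, pos_cons_self' h1, pos_cons_self' h2⟩
        show k + 1 ≤ List.count e (e :: x')
        rw [List.count_cons_self]
        omega
      · have hae : a ≠ e := fun h => hea h.symm
        have hck : k ≤ List.count e x' := h1.2
        refine ⟨k, ⟨h1.1, ?_⟩, pos_cons_ne' hae h1, pos_cons_ne' hae h2⟩
        show k ≤ List.count e (a :: x')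
        rw [List.count_cons]
        omega
    have hord' : ∀ c d, ¬ comm c d → ∀ i j, (c, i) ∈ occ x' → (d, j) ∈ occ x' →
        (pos c i x' < pos d j x' ↔ pos c i (u ++ v) < pos d j (u ++ v)) := by
      intro c d hnc i j hi hj
      obtain ⟨i', hi', e1, e2⟩ := key c i hi
      obtain ⟨j', hj', f1, f2⟩ := key d j hj
      have := hordxY c d hnc i' j' hi' hj'
      rw [e1, f1, e2, f2] at this
      constructor
      · intro hh
        have := this.mp (by omega)
        omega
      · intro hh
        have := this.mpr (by omega)
        omega
    have hx'uv : WordEquiv comm x' (u ++ v) := ih (u ++ v) hocc' hord'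
    exact (wordEquiv_cons a hx'uv).trans (wordEquiv_symm hsymm hbub)


end Aux

/-- `x ≡ y` iff `occ x = occ y` and non-commuting occurrences are
ordered identically in `x` and `y`. -/
theorem wordEquiv_iff_occ_and_order {C : Type*} [DecidableEq C]
    (comm : C → C → Prop) (hsymm : Symmetric comm) (hrefl : Reflexive comm)
    (x y : List C) :
    WordEquiv comm x y ↔
      occ x = occ y ∧
        ∀ c d, ¬ comm c d → ∀ i j, (c, i) ∈ occ x → (d, j) ∈ occ x →
          (pos c i x < pos d j x ↔ pos c i y < pos d j y) := by
  constructor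
  · exact equiv_inv hsymm
  · rintro ⟨h1, h2⟩
    exact inv_equiv hsymm x y h1 h2
end

section
/- Quorum intersection for dependency computation: suppose two conflicting commands have dependency sets D and D' computed as unions of reported dependencies over majority quorums Q and Q' of an n-process system (|Q|, |Q'| ≥ ⌊n/2⌋ + 1), where each process reports id' in its set for id whenever it processed id' before id, and processes any two commands in some order. Then id' ∈ D or id ∈ D'. -/
/-- Property 1, quorum intersection for dependency computation:
for two conflicting commands `id ≠ id'` whose dependency sets `D`, `D'` are
unions of per-process reports over majority quorums `Q`, `Q'`, either
`id' ∈ D` or `id ∈ D'`. Each process `j` reports `b` as a dependency of `a`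
iff it received `b` before `a`, and processes the two commands in some
order. -/
theorem majority_dependency_intersection
    {I : Type*} (n : ℕ) (id id' : I) (hne : id ≠ id')
    (Q Q' : Finset (Fin n))
    (hQ : n / 2 + 1 ≤ Q.card) (hQ' : n / 2 + 1 ≤ Q'.card)
    (before : Fin n → I → I → Prop)
    (htotal : ∀ j : Fin n, before j id id' ∨ before j id' id)
    (D D' : Set I)
    (hD : D = {b | ∃ j ∈ Q, before j b id})
    (hD' : D' = {b | ∃ j ∈ Q', before j b id'}) :
    id' ∈ D ∨ id ∈ D' := by
  have hinter : (Q ∩ Q').Nonempty := by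
    rw [← Finset.card_pos]
    have hu : (Q ∪ Q').card ≤ n := by
      simpa using Finset.card_le_card (Finset.subset_univ (Q ∪ Q'))
    have h := Finset.card_inter_add_card_union Q Q'
    have : n < Q.card + Q'.card := by omega
    omega
  obtain ⟨j, hj⟩ := hinter
  rw [Finset.mem_inter] at hj
  rcases htotal j with h | h
  · right; rw [hD']; exact ⟨j, hj.2, h⟩
  · left; rw [hD]; exact ⟨j, hj.1, h⟩
end

section
/- Slow-path pruning preserves conflict coverage: let Q, Q' be sets of processes with |Q| = |Q'| = ⌊n/2⌋ + f, and D = ⊔_f_{Q} dep, D' = ⊔_f_{Q'} dep' be the multiplicity-≥f unions of reported dependencies for two conflicting identifiers id ≠ id', where every process reports one of the two identifiers as a dependency of the other (each process j that reports for both id and id' satisfies id' ∈ dep_j or id ∈ dep'_j). Then id' ∈ D or id ∈ D'. -/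
/-- slow-path pruning preserves conflict coverage. With
`D = ⊔_f_Q dep` and `D' = ⊔_f_{Q'} dep'` the multiplicity-≥f unions over
quorums of size `⌊n/2⌋ + f`, if every process in `Q ∩ Q'` reports one of the
two conflicting identifiers as a dependency of the other, then `id' ∈ D` or
`id ∈ D'`. -/
theorem pruned_dependency_intersection
    {I : Type*} [DecidableEq I] (n f : ℕ)
    (hf1 : 1 ≤ f) (hf2 : f ≤ (n - 1) / 2)
    (Q Q' : Finset (Fin n))
    (hQcard : Q.card = n / 2 + f) (hQ'card : Q'.card = n / 2 + f)
    (id id' : I) (hne : id ≠ id')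
    (dep dep' : Fin n → Finset I)
    (hreport : ∀ j : Fin n, j ∈ Q → j ∈ Q' → id' ∈ dep j ∨ id ∈ dep' j)
    (D D' : Set I)
    (hD : D = {x | f ≤ (Q.filter (fun j => x ∈ dep j)).card})
    (hD' : D' = {x | f ≤ (Q'.filter (fun j => x ∈ dep' j)).card}) :
    id' ∈ D ∨ id ∈ D' := by
  by_contra hcon
  push_neg at hcon
  obtain ⟨h1, h2⟩ := hcon
  rw [hD] at h1; rw [hD'] at h2
  simp only [Set.mem_setOf_eq, not_le] at h1 h2
  set A := Q.filter (fun j => id' ∉ dep j) with hA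
  set B := Q'.filter (fun j => id ∉ dep' j) with hB
  have hAcard : n / 2 + 1 ≤ A.card := by
    have h := Finset.card_filter_add_card_filter_not
      (s := Q) (p := fun j => id' ∈ dep j)
    have he : (Q.filter (fun a => ¬ id' ∈ dep a)).card = A.card := rfl
    omega
  have hBcard : n / 2 + 1 ≤ B.card := by
    have h := Finset.card_filter_add_card_filter_not
      (s := Q') (p := fun j => id ∈ dep' j)
    have he : (Q'.filter (fun a => ¬ id ∈ dep' a)).card = B.card := rfl
    omega
  have hinter : (A ∩ B).Nonempty := by
    rw [← Finset.card_pos]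
    have hu := Finset.card_union_add_card_inter A B
    have hle : (A ∪ B).card ≤ n := by
      simpa using Finset.card_le_card (Finset.subset_univ (A ∪ B))
    have hn : 1 ≤ n := by
      rcases Finset.card_pos.mp (show 0 < Q.card by omega) with ⟨j, _⟩
      exact j.pos
    omega
  obtain ⟨j, hj⟩ := hinter
  simp only [Finset.mem_inter, hA, hB, Finset.mem_filter] at hj
  rcases hreport j hj.1.1 hj.2.1 with h | h
  · exact hj.1.2 h
  · exact hj.2.2 h
end

section
/- Legality of the constructed linearization: let δ be a word containing each submitted command once, ordered consistently with a relation that totally orders all pairs of non-commuting commands, and such that each local log λ_i satisfies [λ_i] ⊑ [δ]. Then for every command c occurring in λ_i, the response value computed locally, τ*(s₀, λ_i↾c).val, equals the response value in the linearization, τ*(s₀, δ↾c).val. -/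
/-- Repeated application of the transition function over a command word. -/
def tauStar {S C V : Type*} (τ : S → C → S × V) (nil : V) : S → List C → S × V
  | s, [] => (s, nil)
  | s, [c] => τ s c
  | s, c :: w => tauStar τ nil (τ s c).1 w

/-- Commutation of two commands. -/
def Commutes {S C V : Type*} (τ : S → C → S × V) (nil : V) (c d : C) : Prop :=
  ∀ s : S,
    (tauStar τ nil s [c, d]).1 = (tauStar τ nil s [d, c]).1 ∧
    (tauStar τ nil s [d, c]).2 = (tauStar τ nil s [c]).2 ∧
    (tauStar τ nil s [c, d]).2 = (tauStar τ nil s [d]).2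

section AuxL
set_option linter.unusedSectionVars false
variable {S C V : Type*} [DecidableEq C] (τ : S → C → S × V) (nil : V)

def st (s : S) (w : List C) : S := w.foldl (fun s c => (τ s c).1) s

lemma st_append (s : S) (u v : List C) : st τ s (u ++ v) = st τ (st τ s u) v :=
  List.foldl_append

lemma tauStar_cons (s : S) (c : C) (w : List C) (hw : w ≠ []) :
    tauStar τ nil s (c :: w) = tauStar τ nil (τ s c).1 w := by
  cases w with
  | nil => exact absurd rfl hw
  | cons d w' => rfl

lemma tauStar_fst (s : S) (w : List C) : (tauStar τ nil s w).1 = st τ s w := by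
  induction w generalizing s with
  | nil => rfl
  | cons c w ih =>
    cases w with
    | nil => rfl
    | cons d w' =>
      rw [tauStar_cons τ nil s c (d :: w') (by simp), ih]
      rfl

lemma tauStar_append (s : S) (u v : List C) (hv : v ≠ []) :
    tauStar τ nil s (u ++ v) = tauStar τ nil (st τ s u) v := by
  induction u generalizing s with
  | nil => rfl
  | cons a u' ih =>
    rw [List.cons_append, tauStar_cons τ nil s a (u' ++ v) (by simp [hv]), ih]
    rfl

lemma pos_eq (c : C) (u v : List C) (hc : c ∉ u) :
    pos c 1 (u ++ c :: v) = u.length + 1 := by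
  induction u with
  | nil => simp [pos]
  | cons a u' ih =>
    have ha : a ≠ c := by rintro rfl; exact hc List.mem_cons_self
    have ih' := ih (fun h => hc (List.mem_cons_of_mem a h))
    simp [pos, ha, ih']

lemma take_len (u : List C) (c : C) (v : List C) :
    (u ++ c :: v).take (u.length + 1) = u ++ [c] := by
  induction u with
  | nil => simp
  | cons a u' ih => simp [ih]

lemma resp_decomp (s : S) (u v : List C) (c : C) (hc : c ∉ u) :
    (tauStar τ nil s ((u ++ c :: v).take (pos c 1 (u ++ c :: v)))).2 =
      (tauStar τ nil (st τ s u) [c]).2 := by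
  rw [pos_eq c u v hc, take_len, tauStar_append τ nil s u [c] (by simp)]

lemma swap_perm {comm : C → C → Prop} {x y : List C} (h : SwapStep comm x y) :
    x.Perm y := by
  obtain ⟨z, w, cc, dd, _, rfl, rfl⟩ := h
  exact List.Perm.append_left z (List.Perm.swap dd cc w)

lemma swap_resp (s₀ : S) {x y : List C} (h : SwapStep (Commutes τ nil) x y)
    (c : C) (h1 : x.count c = 1) :
    (tauStar τ nil s₀ (x.take (pos c 1 x))).2 =
      (tauStar τ nil s₀ (y.take (pos c 1 y))).2 := by
  obtain ⟨z, w, cc, dd, hcomm, rfl, rfl⟩ := h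
  by_cases hz : c ∈ z
  · obtain ⟨u, v, rfl⟩ := List.append_of_mem hz
    have hcu : c ∉ u := by
      intro hmem
      have h2 : 0 < u.count c := List.count_pos_iff.2 hmem
      simp [List.count_append, List.count_cons] at h1
      omega
    have e1 : (u ++ c :: v) ++ cc :: dd :: w = u ++ c :: (v ++ cc :: dd :: w) := by simp
    have e2 : (u ++ c :: v) ++ dd :: cc :: w = u ++ c :: (v ++ dd :: cc :: w) := by simp
    rw [e1, e2, resp_decomp τ nil s₀ u _ c hcu, resp_decomp τ nil s₀ u _ c hcu]
  · by_cases hc1 : c = cc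
    · subst hc1
      have hdc : dd ≠ c := by
        rintro rfl
        simp [List.count_append, List.count_cons] at h1
        omega
      have e2 : z ++ dd :: c :: w = (z ++ [dd]) ++ c :: w := by simp
      have hz2 : c ∉ z ++ [dd] := by
        simp [hdc]
        exact ⟨hz, fun h => hdc h.symm⟩
      rw [e2, resp_decomp τ nil s₀ z (dd :: w) c hz,
        resp_decomp τ nil s₀ (z ++ [dd]) w c hz2]
      have hcm := (hcomm (st τ s₀ z)).2.1
      rw [tauStar_cons τ nil (st τ s₀ z) dd [c] (by simp)] at hcm
      rw [show st τ s₀ (z ++ [dd]) = (τ (st τ s₀ z) dd).1 from st_append τ s₀ z [dd]]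
      exact hcm.symm
    · by_cases hc2 : c = dd
      · subst hc2
        have hcc : cc ≠ c := fun h => hc1 h.symm
        have e1 : z ++ cc :: c :: w = (z ++ [cc]) ++ c :: w := by simp
        have hz2 : c ∉ z ++ [cc] := by
          simp [hcc]
          exact ⟨hz, hc1⟩
        rw [e1, resp_decomp τ nil s₀ (z ++ [cc]) w c hz2,
          resp_decomp τ nil s₀ z (cc :: w) c hz]
        have hcm := (hcomm (st τ s₀ z)).2.2
        rw [tauStar_cons τ nil (st τ s₀ z) cc [c] (by simp)] at hcm
        rw [show st τ s₀ (z ++ [cc]) = (τ (st τ s₀ z) cc).1 from st_append τ s₀ z [cc]]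
        exact hcm
      · -- c ∈ w
        have hcw : c ∈ w := by
          have hmem : c ∈ z ++ cc :: dd :: w := List.count_pos_iff.1 (by omega)
          simp at hmem
          rcases hmem with h | h | h | h
          · exact absurd h hz
          · exact absurd h hc1
          · exact absurd h hc2
          · exact h
        obtain ⟨u, v, rfl⟩ := List.append_of_mem hcw
        have hcu : c ∉ u := by
          intro hmem
          have h2 : 0 < u.count c := List.count_pos_iff.2 hmem
          simp [List.count_append, List.count_cons] at h1
          omega
        have hA : c ∉ z ++ cc :: dd :: u := by
          simp [hc1, hc2]
          exact ⟨fun h => hz h, fun h => hcu h⟩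
        have hB : c ∉ z ++ dd :: cc :: u := by
          simp [hc1, hc2]
          exact ⟨fun h => hz h, fun h => hcu h⟩
        have e1 : z ++ cc :: dd :: (u ++ c :: v) = (z ++ cc :: dd :: u) ++ c :: v := by simp
        have e2 : z ++ dd :: cc :: (u ++ c :: v) = (z ++ dd :: cc :: u) ++ c :: v := by simp
        rw [e1, e2, resp_decomp τ nil s₀ _ v c hA, resp_decomp τ nil s₀ _ v c hB]
        have hstA : st τ s₀ (z ++ cc :: dd :: u) = st τ (st τ (st τ s₀ z) [cc, dd]) u := by
          rw [st_append τ s₀ z (cc :: dd :: u)]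
          exact st_append τ _ [cc, dd] u
        have hstB : st τ s₀ (z ++ dd :: cc :: u) = st τ (st τ (st τ s₀ z) [dd, cc]) u := by
          rw [st_append τ s₀ z (dd :: cc :: u)]
          exact st_append τ _ [dd, cc] u
        have hcm := (hcomm (st τ s₀ z)).1
        rw [tauStar_fst, tauStar_fst] at hcm
        rw [hstA, hstB, hcm]

lemma wordEquiv_perm {comm : C → C → Prop} {x y : List C}
    (h : WordEquiv comm x y) : x.Perm y := by
  induction h with
  | refl => exact List.Perm.refl _
  | tail _ hstep ih => exact ih.trans (swap_perm hstep)

lemma wordEquiv_resp (s₀ : S) {x y : List C}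
    (h : WordEquiv (Commutes τ nil) x y) (c : C) (h1 : x.count c = 1) :
    (tauStar τ nil s₀ (x.take (pos c 1 x))).2 =
      (tauStar τ nil s₀ (y.take (pos c 1 y))).2 := by
  induction h with
  | refl => rfl
  | @tail b y hab hstep ih =>
    have hb : b.count c = 1 := by
      rw [← (wordEquiv_perm hab).count_eq]; exact h1
    exact ih.trans (swap_resp τ nil s₀ hstep c hb)

end AuxL

/-- legality of the constructed linearization `δ`: it contains
each submitted command once, is ordered consistently with a relation `r`
totally ordering non-commuting commands, and each local log `λᵢ` (in which
each command occurs at most once) is a trace prefix of `δ`; hence every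
command `c` of `λᵢ` gets the same response value locally and in `δ`. -/
theorem linearization_legal {S C V : Type*} [DecidableEq C]
    (τ : S → C → S × V) (nil : V) (s₀ : S)
    (δ lam : List C)
    (hδnodup : δ.Nodup)
    (r : C → C → Prop)
    (htotal : ∀ c d, c ∈ δ → d ∈ δ → c ≠ d → ¬ Commutes τ nil c d →
      r c d ∨ r d c)
    (hδord : ∀ c d, c ∈ δ → d ∈ δ → r c d → pos c 1 δ < pos d 1 δ)
    (hcount : ∀ c : C, lam.count c ≤ 1)
    (hpre : ∃ z, WordEquiv (Commutes τ nil) (lam ++ z) δ) :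
    ∀ c ∈ lam,
      (tauStar τ nil s₀ (lam.take (pos c 1 lam))).2 =
        (tauStar τ nil s₀ (δ.take (pos c 1 δ))).2 := by
  obtain ⟨zz, hEq⟩ := hpre
  intro c hc
  have hperm : (lam ++ zz).Perm δ := wordEquiv_perm hEq
  have hcd : c ∈ δ := hperm.mem_iff.1 (List.mem_append_left zz hc)
  have hδc : δ.count c = 1 := List.count_eq_one_of_mem hδnodup hcd
  have hx : (lam ++ zz).count c = 1 := by rw [hperm.count_eq]; exact hδc
  obtain ⟨u, v, rfl⟩ := List.append_of_mem hc
  have hcu : c ∉ u := by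
    intro hmem
    have h2 : 0 < u.count c := List.count_pos_iff.2 hmem
    have h3 := hcount c
    simp [List.count_append, List.count_cons] at h3
    omega
  have e1 : (u ++ c :: v) ++ zz = u ++ c :: (v ++ zz) := by simp
  have key : (tauStar τ nil s₀ (((u ++ c :: v) ++ zz).take
      (pos c 1 ((u ++ c :: v) ++ zz)))).2 =
      (tauStar τ nil s₀ (δ.take (pos c 1 δ))).2 :=
    wordEquiv_resp τ nil s₀ hEq c hx
  rw [e1, resp_decomp τ nil s₀ u (v ++ zz) c hcu] at key
  rw [resp_decomp τ nil s₀ u v c hcu]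
  exact key
end
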